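/- Let m, s be positive integers with gcd(s, m) = 1 and let μ ∈ F_{2^{3m}}. Then the set of roots in F_{2^{3m}} of f_μ(x) = x^{2^{m+s}} + μ x^{2^s} + x forms an F_2-subspace of dimension at most 3. -/

import Mathlib

set_option linter.unusedVariables false


open Module Polynomial

section Aux

variable {K : Type*} [Field K] [Fintype K]

set_option linter.unusedSectionVars false in
private lemma ppow (x : K) (i j : ℕ) : (x ^ (2:ℕ) ^ i) ^ (2:ℕ) ^ j = x ^ (2:ℕ) ^ (i + j) := by
  rw [← pow_mul, ← pow_add]

private lemma zmod_cases : ∀ c : ZMod 2, c = 0 ∨ c = 1 := by decide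

/-- Every `ZMod 2`-linear endomorphism of a finite field of order `2^n` is a
linearized polynomial. -/
private lemma linearized_rep (n : ℕ) (hn : 0 < n) (hK : Fintype.card K = 2 ^ n)
    [Algebra (ZMod 2) K] (φ : K →ₗ[ZMod 2] K) :
    ∃ a : Fin n → K, ∀ x : K, φ x = ∑ j : Fin n, a j * x ^ (2:ℕ) ^ (j : ℕ) := by
  haveI : Fact (Nat.Prime 2) := ⟨Nat.prime_two⟩
  haveI hchar : CharP K 2 := charP_of_injective_ringHom (algebraMap (ZMod 2) K).injective 2
  haveI : ExpChar K 2 := inferInstance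
  let Lm : (Fin n → K) → (K →ₗ[ZMod 2] K) := fun a =>
    { toFun := fun x => ∑ j : Fin n, a j * x ^ (2:ℕ) ^ (j : ℕ)
      map_add' := by
        intro x y
        rw [← Finset.sum_add_distrib]
        refine Finset.sum_congr rfl fun j _ => ?_
        rw [add_pow_char_pow, mul_add]
      map_smul' := by
        intro c x
        rcases zmod_cases c with rfl | rfl
        · simp [zero_pow]
        · simp }
  let Φ : (Fin n → K) →ₗ[ZMod 2] (K →ₗ[ZMod 2] K) :=
    { toFun := Lm
      map_add' := by
        intro a b
        ext x
        simp only [Lm, LinearMap.coe_mk, AddHom.coe_mk, LinearMap.add_apply, Pi.add_apply]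
        rw [← Finset.sum_add_distrib]
        exact Finset.sum_congr rfl fun j _ => by ring
      map_smul' := by
        intro c a
        ext x
        rcases zmod_cases c with rfl | rfl <;>
          simp [Lm] }
  have hfr : finrank (ZMod 2) K = n := by
    have h := card_eq_pow_finrank (K := ZMod 2) (V := K)
    rw [ZMod.card, hK] at h
    exact (Nat.pow_right_injective (le_refl 2) h.symm)
  have hd : finrank (ZMod 2) (Fin n → K) = finrank (ZMod 2) (K →ₗ[ZMod 2] K) := by
    rw [Module.finrank_linearMap, Module.finrank_pi_fintype]
    simp [hfr, Finset.sum_const, mul_comm]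
  have hinj : Function.Injective Φ := by
    rw [← LinearMap.ker_eq_bot, LinearMap.ker_eq_bot']
    intro a ha
    have heval : ∀ x : K, (∑ j : Fin n, C (a j) * X ^ ((2:ℕ) ^ (j : ℕ))).eval x = 0 := by
      intro x
      have := congrArg (fun f : K →ₗ[ZMod 2] K => f x) ha
      simpa [Φ, Lm, eval_finset_sum] using this
    have hp0 : (∑ j : Fin n, C (a j) * X ^ ((2:ℕ) ^ (j : ℕ))) = 0 := by
      apply Polynomial.eq_zero_of_natDegree_lt_card_of_eval_eq_zero _
        (Function.injective_id) heval
      rw [hK]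
      refine lt_of_le_of_lt (Polynomial.natDegree_sum_le_of_forall_le _ _ fun j _ => ?_)
        (Nat.pow_lt_pow_right one_lt_two (Nat.sub_lt hn one_pos) : 2^(n-1) < 2^n)
      refine le_trans (Polynomial.natDegree_C_mul_le _ _) ?_
      rw [Polynomial.natDegree_X_pow]
      exact Nat.pow_le_pow_right (by norm_num) (by omega)
    funext j
    have hc := congrArg (fun p : K[X] => p.coeff ((2:ℕ) ^ (j : ℕ))) hp0
    simp only [Polynomial.finset_sum_coeff, Polynomial.coeff_C_mul, Polynomial.coeff_X_pow,
      Polynomial.coeff_zero] at hc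
    rw [Finset.sum_eq_single j] at hc
    · simpa using hc
    · intro i _ hij
      have : (2:ℕ) ^ (i:ℕ) ≠ 2 ^ (j:ℕ) := fun h =>
        hij (Fin.ext (Nat.pow_right_injective (le_refl 2) h))
      simp [Ne.symm this]
    · intro h; exact absurd (Finset.mem_univ j) h
  have hsurj : Function.Surjective Φ :=
    (LinearMap.injective_iff_surjective_of_finrank_eq_finrank hd).mp hinj
  obtain ⟨a, ha⟩ := hsurj φ
  exact ⟨a, fun x => by rw [← ha]; rfl⟩

set_option linter.unusedSectionVars false in
/-- A `ZMod 2`-linear functional extension: dual family for independent vectors. -/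
private lemma exists_dual [Algebra (ZMod 2) K] {v : Fin 4 → K}
    (hind : LinearIndependent (ZMod 2) v) (k : Fin 4) :
    ∃ φ : K →ₗ[ZMod 2] K, ∀ i, φ (v i) = if i = k then 1 else 0 := by
  classical
  have hsub : LinearIndepOn (ZMod 2) id (Set.range v) := hind.linearIndepOn_id
  let B := Module.Basis.extend hsub
  let g : hsub.extend (Set.subset_univ _) → K := fun e =>
    if h : ∃ i, v i = (e : K) then (if h.choose = k then 1 else 0) else 0
  refine ⟨B.constr ℕ g, fun i => ?_⟩
  have hmem : v i ∈ hsub.extend (Set.subset_univ _) := hsub.subset_extend _ ⟨i, rfl⟩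
  have hvB : v i = B ⟨v i, hmem⟩ := (Module.Basis.extend_apply_self hsub ⟨v i, hmem⟩).symm
  rw [hvB, Basis.constr_basis]
  have hex : ∃ i', v i' = v i := ⟨i, rfl⟩
  simp only [g]
  rw [dif_pos hex]
  have : hex.choose = i := hind.injective hex.choose_spec
  rw [this]

end Aux
section Aux2

variable {K : Type*} [Field K] [Fintype K]

private lemma span3_bound (n : ℕ) (hn : 0 < n) (hK : Fintype.card K = 2 ^ n)
    [Algebra (ZMod 2) K]
    (S : Set K) (h0 : (0:K) ∈ S) (hadd : ∀ x ∈ S, ∀ y ∈ S, x + y ∈ S)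
    (g1 g2 g3 : K → K)
    (hSp : ∀ j : ℕ, ∃ c1 c2 c3 : K, ∀ x ∈ S,
      x ^ (2:ℕ) ^ j = c1 * g1 x + c2 * g2 x + c3 * g3 x) :
    ∃ d : ℕ, d ≤ 3 ∧ Nat.card S = 2 ^ d := by
  classical
  let V' : Submodule (ZMod 2) K :=
    { carrier := S
      add_mem' := fun {x y} hx hy => hadd _ hx _ hy
      zero_mem' := h0
      smul_mem' := by
        intro c x hx
        rcases zmod_cases c with rfl | rfl
        · rw [zero_smul]; exact h0
        · rw [one_smul]; exact hx }
  haveI : FiniteDimensional (ZMod 2) V' := inferInstance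
  haveI : Fintype V' := Fintype.ofFinite _
  refine ⟨Module.finrank (ZMod 2) V', ?_, ?_⟩
  · by_contra hlt
    push_neg at hlt
    have h4 : 4 ≤ Module.finrank (ZMod 2) ↥V' := hlt
    let b := Module.finBasis (ZMod 2) V'
    let v : Fin 4 → K := fun i => (b (Fin.castLE h4 i) : K)
    have hv : ∀ i, v i ∈ S := fun i => (b (Fin.castLE h4 i)).2
    have hind : LinearIndependent (ZMod 2) v := by
      have h2 := b.linearIndependent.comp (Fin.castLE h4) (Fin.castLE_injective h4)
      exact h2.map' V'.subtype (Submodule.ker_subtype V')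
    have hw : ¬ LinearIndependent K (fun i : Fin 4 => ![g1 (v i), g2 (v i), g3 (v i)]) := by
      intro h
      have hle := h.fintype_card_le_finrank
      rw [Module.finrank_pi] at hle
      simp at hle
    obtain ⟨lam, hsum, i0, hi0⟩ := Fintype.not_linearIndependent_iff.mp hw
    have hcomp : ∀ k : Fin 3, ∑ i, lam i * (![g1 (v i), g2 (v i), g3 (v i)]) k = 0 := by
      intro k
      have h := congrFun hsum k
      simp only [Finset.sum_apply, Pi.smul_apply, smul_eq_mul, Pi.zero_apply] at h
      exact h
    have hrel : ∀ j : ℕ, ∑ i, lam i * (v i) ^ (2:ℕ) ^ j = 0 := by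
      intro j
      obtain ⟨c1, c2, c3, hc⟩ := hSp j
      calc ∑ i, lam i * (v i) ^ (2:ℕ)^j
          = ∑ i, (c1 * (lam i * g1 (v i)) + c2 * (lam i * g2 (v i))
              + c3 * (lam i * g3 (v i))) := by
            refine Finset.sum_congr rfl fun i _ => ?_
            rw [hc _ (hv i)]; ring
        _ = c1 * ∑ i, lam i * g1 (v i) + c2 * ∑ i, lam i * g2 (v i)
              + c3 * ∑ i, lam i * g3 (v i) := by
            rw [Finset.sum_add_distrib, Finset.sum_add_distrib,
              Finset.mul_sum, Finset.mul_sum, Finset.mul_sum]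
        _ = 0 := by
            have e1 := hcomp 0; have e2 := hcomp 1; have e3 := hcomp 2
            simp only [Matrix.cons_val_zero, Matrix.cons_val_one, Matrix.head_cons,
              Matrix.cons_val_two, Matrix.tail_cons] at e1 e2 e3
            rw [e1, e2, e3]; ring
    have hlam : ∀ k, lam k = 0 := by
      intro k
      obtain ⟨φ, hφ⟩ := exists_dual hind k
      obtain ⟨a, ha⟩ := linearized_rep n hn hK φ
      have hz : ∑ i, lam i * φ (v i) = 0 := by
        calc ∑ i, lam i * φ (v i)
            = ∑ i, ∑ j : Fin n, a j * (lam i * (v i) ^ (2:ℕ)^(j:ℕ)) := by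
              refine Finset.sum_congr rfl fun i _ => ?_
              rw [ha, Finset.mul_sum]
              exact Finset.sum_congr rfl fun j _ => by ring
          _ = ∑ j : Fin n, a j * ∑ i, lam i * (v i) ^ (2:ℕ)^(j:ℕ) := by
              rw [Finset.sum_comm]
              exact Finset.sum_congr rfl fun j _ => by rw [Finset.mul_sum]
          _ = 0 := by
              refine Finset.sum_eq_zero fun j _ => ?_
              rw [hrel (j:ℕ), mul_zero]
      rw [Finset.sum_congr rfl (fun i _ => by rw [hφ i])] at hz
      simpa using hz
    exact hi0 (hlam i0)
  · have hcard : Fintype.card V' = 2 ^ Module.finrank (ZMod 2) ↥V' := by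
      have h := card_eq_pow_finrank (K := ZMod 2) (V := V')
      rwa [ZMod.card] at h
    rw [← hcard]
    have : Nat.card S = Nat.card V' := rfl
    rw [this, Nat.card_eq_fintype_card]

end Aux2
private lemma arith_aux (m s : ℕ) (hm : 0 < m) (hs : 0 < s) (hgcd : Nat.gcd s m = 1) (j : ℕ) :
    ∃ a b t : ℕ, j + t * (3 * m) = a * m + b * s := by
  rcases eq_or_lt_of_le (show 1 ≤ m from hm) with h1 | h1
  · obtain rfl : m = 1 := h1.symm
    exact ⟨j, 0, 0, by simp⟩
  · have hco : Nat.Coprime s m := hgcd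
    obtain ⟨c, -, hc⟩ := Nat.exists_mul_mod_eq_one_of_coprime hco h1
    set b := (j * c) % m with hb
    have hbs : b * s % m = j % m := by
      rw [hb, Nat.mod_mul_mod, show j * c * s = j * (s * c) by ring, Nat.mul_mod, hc,
        mul_one, Nat.mod_mod]
    have hle : b * s ≤ j + (b * s) * (3 * m) := by
      have : b * s * 1 ≤ b * s * (3 * m) := Nat.mul_le_mul_left _ (by omega)
      omega
    have hmod : (b * s) % m = (j + (b * s) * (3 * m)) % m := by
      rw [hbs, show (b*s) * (3*m) = (b*s*3) * m by ring, Nat.add_mul_mod_self_right]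
    have hdvd : m ∣ (j + (b * s) * (3 * m)) - b * s :=
      (Nat.modEq_iff_dvd' hle).mp hmod
    obtain ⟨a, ha⟩ := hdvd
    refine ⟨a, b, b * s, ?_⟩
    have hca := Nat.sub_add_cancel hle
    rw [ha] at hca
    rw [← hca, Nat.mul_comm]
set_option linter.unusedSectionVars false in
set_option maxHeartbeats 1000000 in
private lemma part3 {K : Type*} [Field K] [Fintype K] (m s : ℕ) (hm : 0 < m) (hs : 0 < s)
    (hgcd : Nat.gcd s m = 1) (hK : Fintype.card K = 2 ^ (3 * m)) (μ : K)
    [CharP K 2] [Algebra (ZMod 2) K]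
    (h0 : (0:K) ∈ {x : K | x ^ 2 ^ (m + s) + μ * x ^ 2 ^ s + x = 0})
    (hadd : ∀ x ∈ {x : K | x ^ 2 ^ (m + s) + μ * x ^ 2 ^ s + x = 0},
      ∀ y ∈ {x : K | x ^ 2 ^ (m + s) + μ * x ^ 2 ^ s + x = 0},
        x + y ∈ {x : K | x ^ 2 ^ (m + s) + μ * x ^ 2 ^ s + x = 0}) :
    ∃ d : ℕ, d ≤ 3 ∧
      Nat.card {x : K | x ^ 2 ^ (m + s) + μ * x ^ 2 ^ s + x = 0} = 2 ^ d := by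
  haveI : Fact (Nat.Prime 2) := ⟨Nat.prime_two⟩
  haveI : ExpChar K 2 := inferInstance
  set S : Set K := {x : K | x ^ 2 ^ (m + s) + μ * x ^ 2 ^ s + x = 0} with hSdef
  have h2 : (2:K) = 0 := by
    have := CharP.cast_eq_zero K 2; exact_mod_cast this
  have Fadd : ∀ (t : ℕ) (a b : K), (a + b) ^ (2:ℕ) ^ t = a ^ (2:ℕ)^t + b ^ (2:ℕ)^t :=
    fun t a b => add_pow_char_pow ..
  have hred3 : ∀ x : K, x ^ (2:ℕ) ^ (3*m) = x := fun x => by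
    rw [← hK]; exact FiniteField.pow_card x
  have h1 : ∀ x ∈ S, x ^ (2:ℕ) ^ (m+s) = μ * x ^ (2:ℕ)^s + x := by
    intro x hx
    have hx' : x ^ 2 ^ (m + s) + μ * x ^ 2 ^ s + x = 0 := hx
    linear_combination hx' - (μ * x ^ (2:ℕ)^s + x) * h2
  have h1b : ∀ x ∈ S, x ^ (2:ℕ)^(2*m+s)
      = μ^(2:ℕ)^m * μ * x^(2:ℕ)^s + μ^(2:ℕ)^m * x + x^(2:ℕ)^m := by
    intro x hx
    have e : (x ^ (2:ℕ)^(m+s)) ^ (2:ℕ)^m = (μ * x ^ (2:ℕ)^s + x) ^ (2:ℕ)^m := by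
      rw [h1 x hx]
    rw [ppow, Fadd, mul_pow, ppow] at e
    rw [show m+s+m = 2*m+s by ring, show s+m = m+s by ring] at e
    linear_combination e + μ^(2:ℕ)^m * (h1 x hx)
  have hstar : ∀ x ∈ S, x^(2:ℕ)^s + (μ * μ^(2:ℕ)^m * μ^(2:ℕ)^(2*m)) * x^(2:ℕ)^s
      = μ^(2:ℕ)^m * μ^(2:ℕ)^(2*m) * x + μ^(2:ℕ)^(2*m) * x^(2:ℕ)^m + x^(2:ℕ)^(2*m) := by
    intro x hx
    have e : (x ^ (2:ℕ)^(2*m+s)) ^ (2:ℕ)^m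
        = (μ^(2:ℕ)^m * μ * x^(2:ℕ)^s + μ^(2:ℕ)^m * x + x^(2:ℕ)^m) ^ (2:ℕ)^m := by
      rw [h1b x hx]
    rw [ppow] at e
    rw [show 2*m+s+m = 3*m+s by ring, ← ppow x (3*m) s, hred3] at e
    rw [Fadd, Fadd, mul_pow, mul_pow, mul_pow, ppow, ppow, ppow] at e
    rw [show m+m = 2*m by ring, show s+m = m+s by ring] at e
    linear_combination e + μ^(2:ℕ)^(2*m) * μ^(2:ℕ)^m * (h1 x hx)
      + (μ * μ^(2:ℕ)^m * μ^(2:ℕ)^(2*m) * x^(2:ℕ)^s) * h2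
  have main : (∀ x ∈ S, x = 0) ∨ ∃ A B C' : K, ∀ x ∈ S,
      x ^ (2:ℕ)^s = A * x + B * x^(2:ℕ)^m + C' * x^(2:ℕ)^(2*m) := by
    by_cases hN1 : (1:K) + μ * μ^(2:ℕ)^m * μ^(2:ℕ)^(2*m) = 0
    · -- norm = 1 case
      have hR2 : ∀ x ∈ S, x^(2:ℕ)^(2*m)
          = μ^(2:ℕ)^m * μ^(2:ℕ)^(2*m) * x + μ^(2:ℕ)^(2*m) * x^(2:ℕ)^m := by
        intro x hx
        linear_combination x^(2:ℕ)^s * hN1 - hstar x hx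
          - (μ^(2:ℕ)^m * μ^(2:ℕ)^(2*m) * x + μ^(2:ℕ)^(2*m) * x^(2:ℕ)^m) * h2
      have hEid : ∀ x ∈ S,
          (μ^(2:ℕ)^m * μ + (μ^(2:ℕ)^m * μ^(2:ℕ)^(2*m))^(2:ℕ)^s
            + μ * (μ^(2:ℕ)^(2*m))^(2:ℕ)^s) * x^(2:ℕ)^s
          = (μ^(2:ℕ)^m + (μ^(2:ℕ)^(2*m))^(2:ℕ)^s) * x + x^(2:ℕ)^m := by
        intro x hx
        have e : (x ^ (2:ℕ)^(2*m)) ^ (2:ℕ)^s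
            = (μ^(2:ℕ)^m * μ^(2:ℕ)^(2*m) * x + μ^(2:ℕ)^(2*m) * x^(2:ℕ)^m) ^ (2:ℕ)^s := by
          rw [hR2 x hx]
        rw [ppow, Fadd, mul_pow, mul_pow, ppow] at e
        linear_combination (h1b x hx) - e - (μ^(2:ℕ)^(2*m))^(2:ℕ)^s * (h1 x hx)
          + (μ^(2:ℕ)^m * μ * x^(2:ℕ)^s - (μ^(2:ℕ)^(2*m))^(2:ℕ)^s * x) * h2
      by_cases hE0 : (μ^(2:ℕ)^m * μ + (μ^(2:ℕ)^m * μ^(2:ℕ)^(2*m))^(2:ℕ)^s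
          + μ * (μ^(2:ℕ)^(2*m))^(2:ℕ)^s) = 0
      · -- E = 0
        have hD : ∀ x ∈ S, x^(2:ℕ)^m = (μ^(2:ℕ)^m + (μ^(2:ℕ)^(2*m))^(2:ℕ)^s) * x := by
          intro x hx
          linear_combination x^(2:ℕ)^s * hE0 - hEid x hx
            - ((μ^(2:ℕ)^m + (μ^(2:ℕ)^(2*m))^(2:ℕ)^s) * x) * h2
        have hGid : ∀ x ∈ S,
            ((μ^(2:ℕ)^m + (μ^(2:ℕ)^(2*m))^(2:ℕ)^s)^(2:ℕ)^s + μ) * x^(2:ℕ)^s = x := by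
          intro x hx
          have e : (x^(2:ℕ)^m)^(2:ℕ)^s
              = ((μ^(2:ℕ)^m + (μ^(2:ℕ)^(2*m))^(2:ℕ)^s) * x)^(2:ℕ)^s := by
            rw [hD x hx]
          rw [ppow, mul_pow] at e
          linear_combination (h1 x hx) - e + (μ * x^(2:ℕ)^s) * h2
        by_cases hG0 : (μ^(2:ℕ)^m + (μ^(2:ℕ)^(2*m))^(2:ℕ)^s)^(2:ℕ)^s + μ = 0
        · left
          intro x hx
          linear_combination x^(2:ℕ)^s * hG0 - hGid x hx
        · right
          refine ⟨((μ^(2:ℕ)^m + (μ^(2:ℕ)^(2*m))^(2:ℕ)^s)^(2:ℕ)^s + μ)⁻¹, 0, 0,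
            fun x hx => ?_⟩
          have hinv : ((μ^(2:ℕ)^m + (μ^(2:ℕ)^(2*m))^(2:ℕ)^s)^(2:ℕ)^s + μ)
              * ((μ^(2:ℕ)^m + (μ^(2:ℕ)^(2*m))^(2:ℕ)^s)^(2:ℕ)^s + μ)⁻¹ = 1 :=
            mul_inv_cancel₀ hG0
          linear_combination ((μ^(2:ℕ)^m + (μ^(2:ℕ)^(2*m))^(2:ℕ)^s)^(2:ℕ)^s + μ)⁻¹
            * (hGid x hx) - x^(2:ℕ)^s * hinv
      · right
        refine ⟨(μ^(2:ℕ)^m * μ + (μ^(2:ℕ)^m * μ^(2:ℕ)^(2*m))^(2:ℕ)^s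
            + μ * (μ^(2:ℕ)^(2*m))^(2:ℕ)^s)⁻¹ * (μ^(2:ℕ)^m + (μ^(2:ℕ)^(2*m))^(2:ℕ)^s),
          (μ^(2:ℕ)^m * μ + (μ^(2:ℕ)^m * μ^(2:ℕ)^(2*m))^(2:ℕ)^s
            + μ * (μ^(2:ℕ)^(2*m))^(2:ℕ)^s)⁻¹, 0, fun x hx => ?_⟩
        have hinv : (μ^(2:ℕ)^m * μ + (μ^(2:ℕ)^m * μ^(2:ℕ)^(2*m))^(2:ℕ)^s
            + μ * (μ^(2:ℕ)^(2*m))^(2:ℕ)^s) * (μ^(2:ℕ)^m * μ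
            + (μ^(2:ℕ)^m * μ^(2:ℕ)^(2*m))^(2:ℕ)^s + μ * (μ^(2:ℕ)^(2*m))^(2:ℕ)^s)⁻¹ = 1 :=
          mul_inv_cancel₀ hE0
        linear_combination (μ^(2:ℕ)^m * μ + (μ^(2:ℕ)^m * μ^(2:ℕ)^(2*m))^(2:ℕ)^s
            + μ * (μ^(2:ℕ)^(2*m))^(2:ℕ)^s)⁻¹ * (hEid x hx) - x^(2:ℕ)^s * hinv
    · right
      refine ⟨(1 + μ * μ^(2:ℕ)^m * μ^(2:ℕ)^(2*m))⁻¹ * (μ^(2:ℕ)^m * μ^(2:ℕ)^(2*m)),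
        (1 + μ * μ^(2:ℕ)^m * μ^(2:ℕ)^(2*m))⁻¹ * μ^(2:ℕ)^(2*m),
        (1 + μ * μ^(2:ℕ)^m * μ^(2:ℕ)^(2*m))⁻¹, fun x hx => ?_⟩
      have hinv : (1 + μ * μ^(2:ℕ)^m * μ^(2:ℕ)^(2*m))
          * (1 + μ * μ^(2:ℕ)^m * μ^(2:ℕ)^(2*m))⁻¹ = 1 := mul_inv_cancel₀ hN1
      linear_combination (1 + μ * μ^(2:ℕ)^m * μ^(2:ℕ)^(2*m))⁻¹ * (hstar x hx)
        - x^(2:ℕ)^s * hinv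
  rcases main with hzero | ⟨A, B, C', hss⟩
  · have hSeq : S = {0} := Set.eq_singleton_iff_unique_mem.mpr ⟨h0, fun x hx => hzero x hx⟩
    refine ⟨0, by norm_num, ?_⟩
    rw [hSeq]
    simp
  · -- span induction
    let Sp : ℕ → Prop := fun j => ∃ c1 c2 c3 : K, ∀ x ∈ S,
      x ^ (2:ℕ)^j = c1 * x + c2 * x^(2:ℕ)^m + c3 * x^(2:ℕ)^(2*m)
    have Sm : ∀ j, Sp j → Sp (j + m) := by
      rintro j ⟨c1, c2, c3, hc⟩
      refine ⟨c3^(2:ℕ)^m, c1^(2:ℕ)^m, c2^(2:ℕ)^m, fun x hx => ?_⟩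
      have e : (x ^ (2:ℕ)^j) ^ (2:ℕ)^m
          = (c1 * x + c2 * x^(2:ℕ)^m + c3 * x^(2:ℕ)^(2*m)) ^ (2:ℕ)^m := by
        rw [hc x hx]
      rw [ppow, Fadd, Fadd, mul_pow, mul_pow, mul_pow, ppow, ppow] at e
      rw [show m+m = 2*m by ring, show 2*m+m = 3*m by ring, hred3] at e
      linear_combination e
    have Ss : ∀ j, Sp j → Sp (j + s) := by
      rintro j ⟨c1, c2, c3, hc⟩
      refine ⟨c1^(2:ℕ)^s * A + c2^(2:ℕ)^s * (μ*A + 1)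
          + c3^(2:ℕ)^s * (μ^(2:ℕ)^m * μ * A + μ^(2:ℕ)^m),
        c1^(2:ℕ)^s * B + c2^(2:ℕ)^s * μ * B + c3^(2:ℕ)^s * (μ^(2:ℕ)^m * μ * B + 1),
        c1^(2:ℕ)^s * C' + c2^(2:ℕ)^s * μ * C' + c3^(2:ℕ)^s * (μ^(2:ℕ)^m * μ * C'),
        fun x hx => ?_⟩
      have e : (x ^ (2:ℕ)^j) ^ (2:ℕ)^s
          = (c1 * x + c2 * x^(2:ℕ)^m + c3 * x^(2:ℕ)^(2*m)) ^ (2:ℕ)^s := by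
        rw [hc x hx]
      rw [ppow, Fadd, Fadd, mul_pow, mul_pow, mul_pow, ppow, ppow] at e
      linear_combination e + c2^(2:ℕ)^s * (h1 x hx) + c3^(2:ℕ)^s * (h1b x hx)
        + (c1^(2:ℕ)^s + c2^(2:ℕ)^s * μ + c3^(2:ℕ)^s * (μ^(2:ℕ)^m * μ)) * (hss x hx)
    have Sdown : ∀ j, Sp (j + 3*m) → Sp j := by
      rintro j ⟨c1, c2, c3, hc⟩
      refine ⟨c1, c2, c3, fun x hx => ?_⟩
      have e2 : x ^ (2:ℕ)^(j + 3*m) = x ^ (2:ℕ)^j := by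
        rw [show j + 3*m = 3*m + j by ring, ← ppow, hred3]
      rw [← e2]
      exact hc x hx
    have Smb : ∀ a b : ℕ, Sp (a * m + b * s) := by
      intro a b
      induction a with
      | zero =>
        induction b with
        | zero => exact ⟨1, 0, 0, fun x hx => by norm_num⟩
        | succ b ih =>
          rw [show 0*m + (b+1)*s = (0*m + b*s) + s by ring]
          exact Ss _ ih
      | succ a ih =>
        rw [show (a+1)*m + b*s = (a*m + b*s) + m by ring]
        exact Sm _ ih
    have Sdownt : ∀ t j, Sp (j + t * (3*m)) → Sp j := by
      intro t
      induction t with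
      | zero => intro j hj; simpa using hj
      | succ t ih =>
        intro j hj
        refine ih j (Sdown _ ?_)
        rwa [show j + (t+1)*(3*m) = (j + t*(3*m)) + 3*m by ring] at hj
    have Sall : ∀ j, Sp j := by
      intro j
      obtain ⟨a, b, t, ht⟩ := arith_aux m s hm hs hgcd j
      refine Sdownt t j ?_
      rw [ht]
      exact Smb a b
    exact span3_bound (3*m) (by positivity) hK S h0 hadd
      (fun x => x) (fun x => x^(2:ℕ)^m) (fun x => x^(2:ℕ)^(2*m)) Sall

/-- For `gcd(s,m) = 1` and `μ ∈ F_{2^{3m}}`, the set of roots of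
`f_μ(x) = x^{2^{m+s}} + μ x^{2^s} + x` in `F_{2^{3m}}` is an `F_2`-subspace of
dimension at most 3.  In characteristic 2, an `F_2`-subspace is exactly a subset
containing `0` and closed under addition, and its `F_2`-dimension is at most `3`
iff its cardinality is at most `2^3`. -/
theorem stmt1 {K : Type*} [Field K] [Fintype K] (m s : ℕ) (hm : 0 < m) (hs : 0 < s)
    (hgcd : Nat.gcd s m = 1) (hK : Fintype.card K = 2 ^ (3 * m)) (μ : K) :
    (0 : K) ∈ {x : K | x ^ 2 ^ (m + s) + μ * x ^ 2 ^ s + x = 0} ∧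
    (∀ x ∈ {x : K | x ^ 2 ^ (m + s) + μ * x ^ 2 ^ s + x = 0},
      ∀ y ∈ {x : K | x ^ 2 ^ (m + s) + μ * x ^ 2 ^ s + x = 0},
        x + y ∈ {x : K | x ^ 2 ^ (m + s) + μ * x ^ 2 ^ s + x = 0}) ∧
    ∃ d : ℕ, d ≤ 3 ∧
      Nat.card {x : K | x ^ 2 ^ (m + s) + μ * x ^ 2 ^ s + x = 0} = 2 ^ d := by
  haveI : Fact (Nat.Prime 2) := ⟨Nat.prime_two⟩
  haveI hchar2 : CharP K 2 := by
    have hc := ringChar.charP K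
    haveI hpf : Fact (Nat.Prime (ringChar K)) := ⟨CharP.char_is_prime K _⟩
    obtain ⟨np, hp, hnp⟩ := FiniteField.card K (ringChar K)
    have hdvd : ringChar K ∣ 2 ^ (3 * m) := by
      rw [← hK, hnp]
      exact dvd_pow_self _ (by positivity)
    have h2 : ringChar K = 2 :=
      (Nat.prime_dvd_prime_iff_eq hp Nat.prime_two).mp (hp.dvd_of_dvd_pow hdvd)
    rw [← h2]; exact hc
  haveI : ExpChar K 2 := inferInstance
  letI : Algebra (ZMod 2) K := ZMod.algebra K 2
  have h0 : (0 : K) ∈ {x : K | x ^ 2 ^ (m + s) + μ * x ^ 2 ^ s + x = 0} := by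
    show (0:K) ^ 2 ^ (m + s) + μ * 0 ^ 2 ^ s + 0 = 0
    rw [zero_pow (by positivity), zero_pow (by positivity)]
    ring
  have hadd : ∀ x ∈ {x : K | x ^ 2 ^ (m + s) + μ * x ^ 2 ^ s + x = 0},
      ∀ y ∈ {x : K | x ^ 2 ^ (m + s) + μ * x ^ 2 ^ s + x = 0},
        x + y ∈ {x : K | x ^ 2 ^ (m + s) + μ * x ^ 2 ^ s + x = 0} := by
    intro x hx y hy
    have hx' : x ^ 2 ^ (m + s) + μ * x ^ 2 ^ s + x = 0 := hx
    have hy' : y ^ 2 ^ (m + s) + μ * y ^ 2 ^ s + y = 0 := hy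
    show (x + y) ^ 2 ^ (m + s) + μ * (x + y) ^ 2 ^ s + (x + y) = 0
    rw [add_pow_char_pow, add_pow_char_pow]
    linear_combination hx' + hy'
  exact ⟨h0, hadd, part3 m s hm hs hgcd hK μ h0 hadd⟩
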